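/- arXiv:1206.3029 — 2 statements merged into one kernel-verified Lean document; each statement's English description precedes it below -/
import Mathlib

section
/- The Mellin transform of the Rician channel power density f(x) = θ^{-1}(K+1) e^{-(K + (K+1)x/θ)} I₀(√(4K(K+1)x/θ)) evaluated at s+1 equals e^{-K} (θ/(K+1))^s Γ(s+1) · ₁F₁(s+1, 1; K), for Re(s) > −1. -/
open MeasureTheory Set

/-- The Mellin transform of a real-valued function on `[0,∞)`. -/
noncomputable def mellinT (f : ℝ → ℝ) (s : ℂ) : ℂ :=
  ∫ x in Ioi (0 : ℝ), (x : ℂ) ^ (s - 1) * (f x : ℂ)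

/-- The modified Bessel function of the first kind of order zero,
`I₀(y) = ∑ₖ (y/2)^{2k} / (k!)²`. -/
noncomputable def besselI0 (y : ℝ) : ℝ :=
  ∑' k : ℕ, (y / 2) ^ (2 * k) / ((k.factorial : ℝ)) ^ 2

/-- Kummer's confluent hypergeometric function `₁F₁(a, b; z)`. -/
noncomputable def kummer1F1 (a b z : ℂ) : ℂ :=
  ∑' k : ℕ, (∏ i ∈ Finset.range k, (a + i)) / (∏ i ∈ Finset.range k, (b + i))
    * z ^ k / (k.factorial : ℂ)

lemma gamma_prod_aux (s : ℂ) (hs : 0 < s.re) (k : ℕ) :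
    Complex.Gamma (s + k) = Complex.Gamma s * ∏ i ∈ Finset.range k, (s + i) := by
  induction k with
  | zero => simp
  | succ n ih =>
    have hne : s + (n : ℂ) ≠ 0 := by
      intro h
      have h2 := congrArg Complex.re h
      simp only [Complex.add_re, Complex.natCast_re, Complex.zero_re] at h2
      have : (0:ℝ) ≤ (n:ℝ) := Nat.cast_nonneg n
      linarith
    have h1 : s + ((n+1 : ℕ) : ℂ) = (s + n) + 1 := by push_cast; ring
    rw [h1, Complex.Gamma_add_one _ hne, ih, Finset.prod_range_succ]
    ring

lemma prod_one_add_aux (k : ℕ) :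
    ∏ i ∈ Finset.range k, ((1:ℂ) + i) = (k.factorial : ℂ) := by
  calc ∏ i ∈ Finset.range k, ((1:ℂ) + i) = ∏ i ∈ Finset.range k, ((i+1 : ℕ) : ℂ) := by
        refine Finset.prod_congr rfl fun i _ => by push_cast; ring
    _ = ((∏ i ∈ Finset.range k, (i+1) : ℕ) : ℂ) := by rw [Nat.cast_prod]
    _ = _ := by rw [Finset.prod_range_add_one_eq_factorial]

/-- Mellin transform of the Rician channel power density:
`M[f; s+1] = e^{-K} (θ/(K+1))^s Γ(s+1) ₁F₁(s+1, 1; K)` for `Re s > -1`. -/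
theorem mellin_rician_density (K θ : ℝ) (hK : 0 ≤ K) (hθ : 0 < θ) (s : ℂ)
    (hs : -1 < s.re) :
    mellinT (fun x => θ⁻¹ * (K + 1) * Real.exp (-(K + (K + 1) * x / θ))
        * besselI0 (Real.sqrt (4 * K * (K + 1) * x / θ))) (s + 1)
      = Real.exp (-K) * ((θ / (K + 1) : ℝ) : ℂ) ^ s * Complex.Gamma (s + 1)
        * kummer1F1 (s + 1) 1 (K : ℂ) := by
  have hK1 : (0:ℝ) < K + 1 := by linarith
  obtain ⟨l, hl_def⟩ : ∃ l : ℝ, l = (K+1)/θ := ⟨_, rfl⟩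
  have hl : (0:ℝ) < l := by rw [hl_def]; positivity
  obtain ⟨c, hc_def⟩ : ∃ c : ℝ, c = K * l := ⟨_, rfl⟩
  have hc : 0 ≤ c := by rw [hc_def]; positivity
  obtain ⟨A, hA_def⟩ : ∃ A : ℝ, A = θ⁻¹ * (K+1) * Real.exp (-K) := ⟨_, rfl⟩
  have hA : 0 < A := by rw [hA_def]; positivity
  have hσ1 : 0 < s.re + 1 := by linarith
  obtain ⟨F, hF_def⟩ : ∃ F : ℕ → ℝ → ℂ, F = fun (k : ℕ) (x : ℝ) =>
    ((A * (c ^ k / ((k.factorial : ℝ)) ^ 2) : ℝ) : ℂ) *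
      ((x:ℂ) ^ (s + k) * Complex.exp (-((l:ℂ) * (x:ℂ)))) := ⟨_, rfl⟩
  -- pointwise expansion of the integrand as a series
  have hptwise : ∀ x ∈ Ioi (0:ℝ),
      (x:ℂ) ^ ((s+1) - 1) * (((θ⁻¹ * (K + 1) * Real.exp (-(K + (K + 1) * x / θ))
        * besselI0 (Real.sqrt (4 * K * (K + 1) * x / θ))) : ℝ) : ℂ) = ∑' k, F k x := by
    intro x hx
    have hx0 : (0:ℝ) < x := hx
    have hxne : (x:ℂ) ≠ 0 := by exact_mod_cast hx0.ne'
    have hbes : besselI0 (Real.sqrt (4 * K * (K + 1) * x / θ))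
        = ∑' k : ℕ, (c * x) ^ k / ((k.factorial : ℝ))^2 := by
      unfold besselI0
      refine tsum_congr fun k => ?_
      have hy : (0:ℝ) ≤ 4 * K * (K + 1) * x / θ := by positivity
      rw [pow_mul, div_pow, Real.sq_sqrt hy]
      congr 2
      rw [hc_def, hl_def]
      field_simp
      ring
    have hexp : Real.exp (-(K + (K + 1) * x / θ)) = Real.exp (-K) * Real.exp (-(l * x)) := by
      rw [← Real.exp_add]
      congr 1
      rw [hl_def]
      field_simp
      ring
    rw [hbes, hexp, add_sub_cancel_right, Complex.ofReal_mul, Complex.ofReal_tsum,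
      ← tsum_mul_left, ← tsum_mul_left]
    refine tsum_congr fun k => ?_
    rw [hF_def]
    simp only
    rw [Complex.cpow_add _ _ hxne, Complex.cpow_natCast, hA_def]
    push_cast
    ring
  -- norm of each term
  have hnormF : ∀ (k:ℕ), ∀ x ∈ Ioi (0:ℝ), ‖F k x‖
      = (A * (c ^ k / ((k.factorial : ℝ))^2)) * (x ^ (s.re + k) * Real.exp (-(l * x))) := by
    intro k x hx
    have hx0 : (0:ℝ) < x := hx
    rw [hF_def]
    simp only [norm_mul, Complex.norm_real, Real.norm_eq_abs, Complex.norm_exp,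
      Complex.norm_cpow_eq_rpow_re_of_pos hx0, Complex.add_re, Complex.natCast_re,
      Complex.neg_re, Complex.mul_re, Complex.ofReal_re, Complex.ofReal_im, zero_mul,
      mul_zero, sub_zero]
    rw [abs_of_nonneg (by positivity), abs_of_nonneg (by positivity : (0:ℝ) ≤ c ^ k / ((k.factorial : ℝ))^2)]
  -- integrability of the real dominating functions
  have hφInt : ∀ k : ℕ, IntegrableOn (fun x:ℝ => x ^ (s.re + (k:ℝ)) * Real.exp (-(l * x)))
      (Ioi 0) volume := by
    intro k
    have h1 : (-1:ℝ) < s.re + k := by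
      have : (0:ℝ) ≤ (k:ℝ) := Nat.cast_nonneg k
      linarith
    have h2 := integrableOn_rpow_mul_exp_neg_mul_rpow h1 zero_lt_one hl
    exact h2.congr_fun (fun x hx => by beta_reduce; rw [Real.rpow_one, neg_mul]) measurableSet_Ioi
  -- integrability of each complex term
  have hInt : ∀ k : ℕ, Integrable (F k) (volume.restrict (Ioi 0)) := by
    intro k
    refine Integrable.mono' ((hφInt k).const_mul (A * (c ^ k / ((k.factorial : ℝ))^2))) ?_ ?_
    · rw [hF_def]
      refine AEStronglyMeasurable.const_mul ?_ _
      refine (ContinuousOn.mul ?_ ?_).aestronglyMeasurable measurableSet_Ioi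
      · exact ContinuousOn.cpow_const (Complex.continuous_ofReal.continuousOn)
          (fun x hx => Complex.ofReal_mem_slitPlane.mpr hx)
      · exact (Complex.continuous_exp.comp (by continuity)).continuousOn
    · filter_upwards [ae_restrict_mem measurableSet_Ioi] with x hx
      rw [hnormF k x hx]
  -- value of the norm integrals
  have hnormint : ∀ k : ℕ, (∫ x in Ioi 0, ‖F k x‖)
      = A * (c ^ k / ((k.factorial : ℝ))^2) * ((1/l) ^ (s.re + k + 1) * Real.Gamma (s.re + k + 1)) := by
    intro k
    rw [setIntegral_congr_fun measurableSet_Ioi (fun x hx => hnormF k x hx),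
      MeasureTheory.integral_const_mul]
    congr 1
    have hpos : 0 < s.re + (k:ℝ) + 1 := by
      have : (0:ℝ) ≤ (k:ℝ) := Nat.cast_nonneg k
      linarith
    have h := Real.integral_rpow_mul_exp_neg_mul_Ioi hpos hl
    rw [show s.re + (k:ℝ) + 1 - 1 = s.re + (k:ℝ) by ring] at h
    rw [h]
  -- summability
  obtain ⟨B, hB_def⟩ : ∃ B : ℕ → ℝ, B = fun (k : ℕ) => A * (c ^ k / ((k.factorial : ℝ))^2)
      * ((1/l) ^ (s.re + k + 1) * Real.Gamma (s.re + k + 1)) := ⟨_, rfl⟩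
  have hrec : ∀ k : ℕ, B (k+1) = ((s.re + k + 1) * (c / (l * ((k:ℝ)+1)^2))) * B k := by
    intro k
    have h1 : s.re + (k:ℝ) + 1 ≠ 0 := by
      have : (0:ℝ) ≤ (k:ℝ) := Nat.cast_nonneg k
      exact ne_of_gt (by linarith)
    simp only [hB_def]
    push_cast [Nat.factorial_succ]
    rw [show s.re + ((k:ℝ)+1) + 1 = (s.re + (k:ℝ) + 1) + 1 by ring,
      Real.rpow_add (by positivity : (0:ℝ) < 1/l), Real.rpow_one, Real.Gamma_add_one h1]
    have hfac : ((k.factorial : ℝ)) ≠ 0 := by positivity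
    field_simp
    ring
  have htend : Filter.Tendsto (fun k : ℕ => (s.re + k + 1) * (c / (l * ((k:ℝ)+1)^2)))
      Filter.atTop (nhds 0) := by
    have hu : Filter.Tendsto (fun k : ℕ => 1/((k:ℝ)+1)) Filter.atTop (nhds 0) :=
      tendsto_one_div_add_atTop_nhds_zero_nat
    have h2 : Filter.Tendsto
        (fun k : ℕ => (c/l) * ((s.re * (1/((k:ℝ)+1)) + 1) * (1/((k:ℝ)+1))))
        Filter.atTop (nhds ((c/l) * ((s.re * 0 + 1) * 0))) :=
      (((hu.const_mul s.re).add_const 1).mul hu).const_mul (c/l)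
    simp only [mul_zero, zero_mul] at h2
    refine Filter.Tendsto.congr (fun k => ?_) h2
    have hk1 : ((k:ℝ)+1) ≠ 0 := by positivity
    field_simp
    ring
  have hSumB : Summable B := by
    apply summable_of_ratio_norm_eventually_le (r := 1/2) (by norm_num : (1:ℝ)/2 < 1)
    filter_upwards [htend.eventually_lt_const (by norm_num : (0:ℝ) < 1/2)] with k hk
    have hrnn : 0 ≤ (s.re + k + 1) * (c / (l * ((k:ℝ)+1)^2)) := by
      have h0 : (0:ℝ) ≤ (k:ℝ) := Nat.cast_nonneg k
      exact mul_nonneg (by linarith) (by positivity)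
    rw [hrec k, Real.norm_eq_abs, Real.norm_eq_abs, abs_mul, abs_of_nonneg hrnn]
    exact mul_le_mul_of_nonneg_right hk.le (abs_nonneg _)
  have hSumInt : Summable fun k : ℕ => ∫ x in Ioi 0, ‖F k x‖ :=
    hSumB.congr fun k => by rw [hB_def]; exact (hnormint k).symm
  -- the complex integrals
  have hl0 : ((l:ℝ):ℂ) ≠ 0 := by exact_mod_cast hl.ne'
  have hinv0 : (1/(l:ℂ)) ≠ 0 := one_div_ne_zero hl0
  have hIk : ∀ k : ℕ, (∫ x in Ioi 0, F k x)
      = ((A * (c ^ k / ((k.factorial : ℝ))^2) : ℝ) : ℂ)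
        * ((1/(l:ℂ))^(s+k+1) * Complex.Gamma (s+k+1)) := by
    intro k
    have hre : 0 < (s + (k:ℂ) + 1).re := by
      have : (0:ℝ) ≤ (k:ℝ) := Nat.cast_nonneg k
      simp only [Complex.add_re, Complex.natCast_re, Complex.one_re]
      linarith
    have h := Complex.integral_cpow_mul_exp_neg_mul_Ioi hre hl
    rw [show s + (k:ℂ) + 1 - 1 = s + (k:ℂ) by ring] at h
    rw [hF_def]
    simp only
    rw [MeasureTheory.integral_const_mul, h]
  -- final algebra
  have hcoe : ((θ / (K+1) : ℝ) : ℂ) = 1/(l:ℂ) := by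
    rw [hl_def]
    push_cast
    rw [one_div_div]
  have h1re : 0 < (s+1).re := by
    simp only [Complex.add_re, Complex.one_re]
    linarith
  have hreal : ∀ k:ℕ, A * (c^k/((k.factorial:ℝ))^2) * (1/l)^(k+1)
      = Real.exp (-K) * (K^k / ((k.factorial:ℝ))^2) := by
    intro k
    have hA' : A = l * Real.exp (-K) := by
      rw [hA_def, hl_def, div_eq_inv_mul]
      try ring
    have hfac : ((k.factorial : ℝ)) ≠ 0 := by positivity
    rw [hA', hc_def, mul_pow, one_div, inv_pow]
    field_simp
    ring
  have hterm : ∀ k:ℕ, ((A * (c ^ k / ((k.factorial : ℝ))^2) : ℝ) : ℂ)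
        * ((1/(l:ℂ))^(s+k+1) * Complex.Gamma (s+k+1))
      = (Real.exp (-K) : ℂ) * ((θ/(K+1):ℝ):ℂ)^s * Complex.Gamma (s+1)
        * ((∏ i ∈ Finset.range k, (s+1+i)) / (∏ i ∈ Finset.range k, ((1:ℂ)+i))
            * (K:ℂ)^k / (k.factorial : ℂ)) := by
    intro k
    have key : ((A * (c ^ k / ((k.factorial:ℝ))^2) : ℝ) : ℂ) * ((1/(l:ℂ)) * (1/(l:ℂ))^k)
        = (Real.exp (-K) : ℂ) * ((K:ℂ)^k / ((k.factorial:ℂ))^2) := by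
      calc ((A * (c ^ k / ((k.factorial:ℝ))^2) : ℝ) : ℂ) * ((1/(l:ℂ)) * (1/(l:ℂ))^k)
          = ((A * (c ^ k / ((k.factorial:ℝ))^2) * (1/l)^(k+1) : ℝ) : ℂ) := by
            push_cast; try ring
        _ = ((Real.exp (-K) * (K^k / ((k.factorial:ℝ))^2) : ℝ) : ℂ) := by rw [hreal k]
        _ = _ := by push_cast; try ring
    rw [hcoe, prod_one_add_aux, show s + (k:ℂ) + 1 = (s+1) + (k:ℂ) from by ring,
      gamma_prod_aux (s+1) h1re k, Complex.cpow_add _ _ hinv0, Complex.cpow_add _ _ hinv0,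
      Complex.cpow_one, Complex.cpow_natCast]
    linear_combination ((1/(l:ℂ))^s * Complex.Gamma (s+1)
      * (∏ i ∈ Finset.range k, (s+1+(i:ℂ)))) * key
  -- put everything together
  have step1 : mellinT (fun x => θ⁻¹ * (K + 1) * Real.exp (-(K + (K + 1) * x / θ))
        * besselI0 (Real.sqrt (4 * K * (K + 1) * x / θ))) (s + 1)
      = ∫ x in Ioi 0, ∑' k, F k x :=
    setIntegral_congr_fun measurableSet_Ioi (fun x hx => hptwise x hx)
  refine step1.trans ?_
  rw [← MeasureTheory.integral_tsum_of_summable_integral_norm hInt hSumInt]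
  unfold kummer1F1
  rw [← tsum_mul_left]
  exact tsum_congr fun k => (hIk k).trans (hterm k)
end

section
/- The Mellin transform of the Hoyt channel power density f(x) = ((1+q²)/(2qθ)) e^{-(1+q²)² x/(4q²θ)} I₀((1−q⁴)x/(4q²θ)) evaluated at s+1 equals (2q/(1+q²))^{2s+1} θ^s Γ(s+1) · ₂F₁((s+1)/2, (s+2)/2; 1; ((1−q²)/(1+q²))²), for Re(s) > −1. -/
open MeasureTheory Set

/-- The Gauss hypergeometric function `₂F₁(a, b; c; z)`. -/
noncomputable def gauss2F1 (a b c z : ℂ) : ℂ :=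
  ∑' k : ℕ, (∏ i ∈ Finset.range k, (a + i)) * (∏ i ∈ Finset.range k, (b + i))
    / (∏ i ∈ Finset.range k, (c + i)) * z ^ k / (k.factorial : ℂ)

open Filter

lemma hoyt_prod_fact (k : ℕ) : (∏ i ∈ Finset.range k, ((1:ℂ)+i)) = (k.factorial : ℂ) := by
  induction k with
  | zero => simp
  | succ n ih => rw [Finset.prod_range_succ, ih, Nat.factorial_succ]; push_cast; ring

lemma hoyt_gamma_prod (z : ℂ) (hz : 0 < z.re) (k : ℕ) :
    Complex.Gamma (z + 2*k) = Complex.Gamma z * ∏ i ∈ Finset.range k, ((z+2*i)*(z+2*i+1)) := by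
  induction k with
  | zero => simp
  | succ n ih =>
    have h1 : z + 2*n ≠ 0 := by
      intro h
      have := congrArg Complex.re h
      simp [Complex.add_re] at this
      nlinarith [this]
    have h2 : z + 2*n + 1 ≠ 0 := by
      intro h
      have := congrArg Complex.re h
      simp [Complex.add_re] at this
      nlinarith [this]
    have e : z + 2*(n+1 : ℕ) = (z + 2*n + 1) + 1 := by push_cast; ring
    rw [e, Complex.Gamma_add_one _ h2, show z + 2*(n:ℕ) + 1 = (z + 2*n) + 1 from rfl,
      Complex.Gamma_add_one _ h1, ih, Finset.prod_range_succ]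
    push_cast
    ring

lemma hoyt_prod_half (z : ℂ) (k : ℕ) :
    ∏ i ∈ Finset.range k, (z/2 + i) = (∏ i ∈ Finset.range k, (z + 2*i)) / 2^k := by
  rw [eq_div_iff (pow_ne_zero _ two_ne_zero),
    show (2:ℂ)^k = ∏ _i ∈ Finset.range k, (2:ℂ) by simp, ← Finset.prod_mul_distrib]
  exact Finset.prod_congr rfl fun i _ => by ring

lemma hoyt_summable_aux (σ c : ℝ) (hσ : 0 < σ) (hc0 : 0 ≤ c) (hc : c < 1/2) :
    Summable (fun k : ℕ => Real.Gamma (σ + 2*k) * c^(2*k) / (k.factorial:ℝ)^2) := by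
  set f : ℕ → ℝ := fun k : ℕ => Real.Gamma (σ + 2*k) * c^(2*k) / (k.factorial:ℝ)^2 with hf
  rcases hc0.eq_or_lt with h | h
  · apply summable_of_ne_finset_zero (s := {0})
    intro k hk
    have : c ^ (2*k) = 0 := by
      rw [← h]; exact zero_pow (by simpa using hk)
    simp [hf, this]
  · have hpos : ∀ k : ℕ, 0 < f k := by
      intro k
      have : 0 < Real.Gamma (σ + 2*k) := Real.Gamma_pos_of_pos (by positivity)
      positivity
    apply summable_of_ratio_test_tendsto_lt_one (l := 4*c^2)
    · nlinarith
    · exact Eventually.of_forall fun k => (hpos k).ne'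
    · have key : ∀ k : ℕ, ‖f (k+1)‖ / ‖f k‖
          = (2 + (σ-1)/(k+1)) * (2 + (σ-2)/(k+1)) * c^2 := by
        intro k
        have hg : 0 < Real.Gamma (σ + 2*k) := Real.Gamma_pos_of_pos (by positivity)
        have h2 : Real.Gamma (σ + 2*((k:ℝ)+1)) = (σ+2*k+1) * ((σ+2*k) * Real.Gamma (σ+2*k)) := by
          rw [show σ + 2*((k:ℝ)+1) = (σ + 2*k + 1) + 1 by ring,
            Real.Gamma_add_one (by positivity), show σ + 2*(k:ℝ) + 1 = (σ + 2*k) + 1 from rfl,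
            Real.Gamma_add_one (by positivity)]
        rw [Real.norm_of_nonneg (hpos (k+1)).le, Real.norm_of_nonneg (hpos k).le, hf]
        simp only []
        push_cast
        rw [h2]
        have hfk : (k.factorial : ℝ) ≠ 0 := Nat.cast_ne_zero.mpr k.factorial_ne_zero
        have hk1 : ((k:ℝ)+1) ≠ 0 := by positivity
        rw [show ((k+1).factorial : ℝ) = (k+1) * k.factorial by rw [Nat.factorial_succ]; push_cast; ring]
        field_simp
        ring
      rw [show (4*c^2) = (2 + 0) * (2 + 0) * c^2 by ring]
      refine Tendsto.congr (fun k => (key k).symm) ?_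
      have t1 : ∀ d : ℝ, Tendsto (fun k : ℕ => d/((k:ℝ)+1)) atTop (nhds 0) := by
        intro d
        have := (tendsto_const_div_atTop_nhds_zero_nat d).comp (tendsto_add_atTop_nat 1)
        refine this.congr fun k => ?_
        simp only [Function.comp_apply]
        push_cast
        ring
      exact Tendsto.mul_const _ (Tendsto.mul (Tendsto.const_add _ (t1 _)) (Tendsto.const_add _ (t1 _)))

lemma hoyt_mellin_aux (A B C : ℝ) (hA : 0 < A) (hB0 : 0 ≤ B) (hBA : B < A) (hC : 0 < C)
    (s : ℂ) (hs : -1 < s.re) :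
    ∫ x in Ioi (0:ℝ), (x:ℂ)^s * ((C * Real.exp (-(A*x)) * besselI0 (B*x) : ℝ) : ℂ)
      = ∑' k : ℕ, ((C * ((B/2)^(2*k) / (k.factorial:ℝ)^2) : ℝ) : ℂ)
          * ((1/(A:ℂ))^(s+2*k+1) * Complex.Gamma (s+2*k+1)) := by
  set F : ℕ → ℝ → ℂ := fun k x =>
    (x:ℂ)^s * ((C * Real.exp (-(A*x)) * ((B*x/2)^(2*k) / (k.factorial:ℝ)^2) : ℝ) : ℂ) with hF
  have hexpand : ∀ x : ℝ, (x:ℂ)^s * ((C * Real.exp (-(A*x)) * besselI0 (B*x) : ℝ) : ℂ)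
      = ∑' k : ℕ, F k x := by
    intro x
    rw [hF]
    simp only [besselI0]
    rw [← tsum_mul_left (a := C * Real.exp (-(A*x))), Complex.ofReal_tsum,
      ← tsum_mul_left (a := (x:ℂ)^s)]
  have hnorm : ∀ k : ℕ, ∀ x ∈ Ioi (0:ℝ), ‖F k x‖
      = C * ((B/2)^(2*k) / (k.factorial:ℝ)^2) * (x ^ (s.re + 2*(k:ℝ)) * Real.exp (-(A*x))) := by
    intro k x hx
    rw [mem_Ioi] at hx
    rw [hF]
    simp only [norm_mul, Complex.norm_cpow_eq_rpow_re_of_pos hx]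
    rw [Complex.norm_real, Real.norm_eq_abs]
    rw [abs_of_nonneg (by positivity)]
    rw [show (B*x/2)^(2*k) = (B/2)^(2*k) * x^(2*k) by rw [← mul_pow]; ring_nf]
    rw [show x ^ (s.re + 2*(k:ℝ)) = x ^ s.re * x ^ (2*k : ℕ) by
      rw [← Real.rpow_natCast x (2*k), ← Real.rpow_add hx]; push_cast; ring_nf]
    ring
  have hmaj : ∀ k : ℕ, IntegrableOn
      (fun x : ℝ => x ^ (s.re + 2*(k:ℝ)) * Real.exp (-(A*x))) (Ioi 0) := by
    intro k
    have := integrableOn_rpow_mul_exp_neg_mul_rpow (p := 1) (s := s.re + 2*(k:ℝ)) (b := A)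
      (by have h : (0:ℝ) ≤ (k:ℝ) := Nat.cast_nonneg k; linarith) zero_lt_one hA
    simpa [Real.rpow_one, neg_mul] using this
  have hmeas : ∀ k : ℕ, AEStronglyMeasurable (F k) (volume.restrict (Ioi 0)) := by
    intro k
    apply ContinuousOn.aestronglyMeasurable _ measurableSet_Ioi
    apply ContinuousOn.mul
    · exact fun x hx => (Complex.continuousAt_ofReal_cpow_const x s
        (Or.inr (ne_of_gt hx))).continuousWithinAt
    · apply Continuous.continuousOn
      apply Complex.continuous_ofReal.comp
      fun_prop
  have hInt : ∀ k : ℕ, Integrable (F k) (volume.restrict (Ioi 0)) := by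
    intro k
    refine Integrable.mono' ((hmaj k).const_mul (C * ((B/2)^(2*k) / (k.factorial:ℝ)^2)))
      (hmeas k) ?_
    rw [ae_restrict_iff' measurableSet_Ioi]
    exact Eventually.of_forall fun x hx => le_of_eq (hnorm k x hx)
  have hNormInt : ∀ k : ℕ, (∫ x in Ioi (0:ℝ), ‖F k x‖)
      = C * ((B/2)^(2*k) / (k.factorial:ℝ)^2)
        * ((1/A) ^ (s.re + 2*(k:ℝ) + 1) * Real.Gamma (s.re + 2*(k:ℝ) + 1)) := by
    intro k
    rw [setIntegral_congr_fun measurableSet_Ioi (hnorm k), integral_const_mul]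
    congr 1
    have h0 : (0:ℝ) < s.re + 2*(k:ℝ) + 1 := by
      have h : (0:ℝ) ≤ (k:ℝ) := Nat.cast_nonneg k
      linarith
    have hval := Real.integral_rpow_mul_exp_neg_mul_Ioi (a := s.re + 2*(k:ℝ) + 1) (r := A) h0 hA
    rw [show s.re + 2*(k:ℝ) + 1 - 1 = s.re + 2*(k:ℝ) by ring] at hval
    exact hval
  have hSum : Summable (fun k : ℕ => ∫ x in Ioi (0:ℝ), ‖F k x‖) := by
    apply Summable.congr _ (fun k => (hNormInt k).symm)
    have base := hoyt_summable_aux (s.re + 1) (B/(2*A)) (by linarith) (by positivity)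
      (by rw [div_lt_iff₀ (by linarith)]; linarith)
    apply Summable.congr ((base.mul_left (C * (1/A) ^ (s.re + 1))))
    intro k
    have h1 : (1/A : ℝ) ^ (s.re + 2*(k:ℝ) + 1)
        = (1/A) ^ (s.re + 1) * (1/A) ^ (2*k : ℕ) := by
      rw [← Real.rpow_natCast (1/A) (2*k), ← Real.rpow_add (by positivity)]
      push_cast; ring_nf
    have h2 : s.re + 2*(k:ℝ) + 1 = s.re + 1 + 2*(k:ℝ) := by ring
    rw [h1, h2]
    rw [show (B/(2*A))^(2*k) = (B/2)^(2*k) * (1/A)^(2*k) by rw [← mul_pow]; ring_nf]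
    ring
  have swap := integral_tsum_of_summable_integral_norm hInt hSum
  have e1 : (∫ x in Ioi (0:ℝ), (x:ℂ)^s * ((C * Real.exp (-(A*x)) * besselI0 (B*x) : ℝ) : ℂ))
      = ∫ x in Ioi (0:ℝ), ∑' k : ℕ, F k x :=
    integral_congr_ae (Eventually.of_forall hexpand)
  rw [e1, ← swap]
  apply tsum_congr
  intro k
  have hpt : ∀ x ∈ Ioi (0:ℝ), F k x
      = ((C * ((B/2)^(2*k) / (k.factorial:ℝ)^2) : ℝ) : ℂ)
        * ((x:ℂ) ^ ((s + 2*(k:ℂ) + 1) - 1) * Complex.exp (-((A:ℂ) * (x:ℂ)))) := by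
    intro x hx
    rw [mem_Ioi] at hx
    rw [hF]
    simp only []
    rw [show (s + 2*(k:ℂ) + 1) - 1 = s + ((2*k : ℕ) : ℂ) by push_cast; ring,
      Complex.cpow_add _ _ (Complex.ofReal_ne_zero.mpr hx.ne'), Complex.cpow_natCast]
    push_cast
    ring
  have hre : 0 < (s + 2*(k:ℂ) + 1).re := by
    simp only [Complex.add_re, Complex.one_re, Complex.mul_re, Complex.re_ofNat,
      Complex.natCast_re, Complex.im_ofNat, Complex.natCast_im]
    have : (0:ℝ) ≤ (k:ℝ) := by positivity
    nlinarith
  rw [setIntegral_congr_fun measurableSet_Ioi hpt, integral_const_mul,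
    Complex.integral_cpow_mul_exp_neg_mul_Ioi hre hA]

/-- Mellin transform of the Hoyt channel power density:
`M[f; s+1] = (2q/(1+q²))^{2s+1} θ^s Γ(s+1) ₂F₁((s+1)/2, (s+2)/2; 1; ((1-q²)/(1+q²))²)`
for `Re s > -1`. -/
theorem mellin_hoyt_density (q θ : ℝ) (hq0 : 0 < q) (hq1 : q ≤ 1) (hθ : 0 < θ) (s : ℂ)
    (hs : -1 < s.re) :
    mellinT (fun x => (1 + q ^ 2) / (2 * q * θ)
        * Real.exp (-(1 + q ^ 2) ^ 2 * x / (4 * q ^ 2 * θ))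
        * besselI0 ((1 - q ^ 4) * x / (4 * q ^ 2 * θ))) (s + 1)
      = ((2 * q / (1 + q ^ 2) : ℝ) : ℂ) ^ (2 * s + 1) * (θ : ℂ) ^ s * Complex.Gamma (s + 1)
        * gauss2F1 ((s + 1) / 2) ((s + 2) / 2) 1
            (((1 - q ^ 2) / (1 + q ^ 2) : ℝ) ^ 2 : ℂ) := by
  set u : ℝ := 2 * q / (1 + q ^ 2) with hu_def
  set w : ℝ := (1 - q ^ 2) / (1 + q ^ 2) with hw_def
  set A : ℝ := (1 + q ^ 2) ^ 2 / (4 * q ^ 2 * θ) with hA_def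
  set B : ℝ := (1 - q ^ 4) / (4 * q ^ 2 * θ) with hB_def
  set C : ℝ := (1 + q ^ 2) / (2 * q * θ) with hC_def
  clear_value u w A B C
  have hq2 : (0:ℝ) < 1 + q ^ 2 := by positivity
  have hA : 0 < A := by rw [hA_def]; positivity
  have hC : 0 < C := by rw [hC_def]; positivity
  have hu : 0 < u := by rw [hu_def]; positivity
  have hw0 : 0 ≤ w := by
    rw [hw_def]
    apply div_nonneg _ hq2.le
    nlinarith
  have hq4 : q^4 ≤ 1 := pow_le_one₀ hq0.le hq1
  have hB0 : 0 ≤ B := by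
    rw [hB_def]
    apply div_nonneg _ (by positivity)
    linarith
  have hBA : B < A := by
    rw [hB_def, hA_def, div_lt_div_iff₀ (by positivity) (by positivity)]
    have ht : (0:ℝ) < 4*q^2*θ := by positivity
    have key : (1-q^4) < (1+q^2)^2 := by nlinarith [pow_pos hq0 2, pow_pos hq0 4]
    exact mul_lt_mul_of_pos_right key ht
  have hBw : B = w * A := by
    rw [hB_def, hw_def, hA_def]
    field_simp
    ring
  have step1 : mellinT (fun x => C
        * Real.exp (-(1 + q ^ 2) ^ 2 * x / (4 * q ^ 2 * θ))
        * besselI0 ((1 - q ^ 4) * x / (4 * q ^ 2 * θ))) (s + 1)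
      = ∫ x in Ioi (0:ℝ), (x:ℂ)^s * ((C * Real.exp (-(A*x)) * besselI0 (B*x) : ℝ) : ℂ) := by
    rw [mellinT]
    refine setIntegral_congr_fun measurableSet_Ioi fun x hx => ?_
    rw [show s+1-1 = s from add_sub_cancel_right s 1,
      show -(1+q^2)^2*x/(4*q^2*θ) = -(A*x) by rw [hA_def]; ring,
      show (1-q^4)*x/(4*q^2*θ) = B*x by rw [hB_def]; ring]
  rw [step1, hoyt_mellin_aux A B C hA hB0 hBA hC s hs]
  simp only [gauss2F1]
  rw [← tsum_mul_left]
  apply tsum_congr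
  intro k
  -- nonvanishing facts
  have hA0 : (1/(A:ℂ)) ≠ 0 := one_div_ne_zero (Complex.ofReal_ne_zero.mpr hA.ne')
  have hu0 : (u:ℂ) ≠ 0 := Complex.ofReal_ne_zero.mpr hu.ne'
  have hθ0 : (θ:ℂ) ≠ 0 := Complex.ofReal_ne_zero.mpr hθ.ne'
  -- the key scalar identity  C * (1/A)^(s+1) = u^(2s+1) * θ^s
  have h1A : (1/A : ℝ) = (u*u) * θ := by
    rw [hA_def, hu_def]
    field_simp
    ring
  have e2 : (1/(A:ℂ))^(s+1) = ((u:ℂ))^(s+1) * ((u:ℂ))^(s+1) * ((θ:ℂ))^(s+1) := by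
    rw [show (1/(A:ℂ)) = (((u*u)*θ : ℝ) : ℂ) by rw [← h1A]; push_cast; ring,
      Complex.ofReal_mul, Complex.mul_cpow_ofReal_nonneg (by positivity) hθ.le,
      Complex.ofReal_mul, Complex.mul_cpow_ofReal_nonneg hu.le hu.le]
  have hKc : (C:ℂ) * (1/(A:ℂ))^(s+1) = (u:ℂ)^(2*s+1) * (θ:ℂ)^s := by
    have hCc : (C:ℂ) = 1/((u:ℂ) * (θ:ℂ)) := by
      rw [show (C:ℝ) = 1/(u*θ) by rw [hC_def, hu_def]; field_simp; try ring]
      push_cast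
      ring
    rw [e2, hCc, Complex.cpow_add _ _ hu0, Complex.cpow_one,
      Complex.cpow_add _ _ hθ0, Complex.cpow_one,
      show (2*s+1 : ℂ) = s + (s+1) by ring, Complex.cpow_add _ _ hu0,
      Complex.cpow_add _ _ hu0, Complex.cpow_one]
    field_simp
  -- the key power identity
  have hPR : ((w^2)^k : ℝ) = (B/2)^(2*k) * (1/A)^(2*k) * (2^k * 2^k) := by
    rw [pow_mul, pow_mul, ← mul_pow (((B/2)^2)) (((1/A)^2)), ← mul_pow (2:ℝ) 2,
      ← mul_pow ((B/2)^2 * (1/A)^2) (2*2)]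
    congr 1
    rw [hBw]
    field_simp
    try ring
  have hPc : (((w:ℂ))^2)^k = ((B:ℂ)/2)^(2*k) * (1/(A:ℂ))^(2*k) * ((2:ℂ)^k * (2:ℂ)^k) := by
    have := congrArg (Complex.ofReal) hPR
    push_cast at this
    exact this
  -- rewrite Gamma and the products
  have hz1 : 0 < (s+1).re := by
    simp only [Complex.add_re, Complex.one_re]
    linarith
  have h2k : ((2:ℂ))^k ≠ 0 := pow_ne_zero _ two_ne_zero
  have e1 := hoyt_prod_half (s+1) k
  have e2 := hoyt_prod_half (s+2) k
  rw [eq_div_iff h2k] at e1 e2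
  rw [show s + 2*(k:ℂ) + 1 = (s+1) + 2*(k:ℕ) by push_cast; ring,
    hoyt_gamma_prod (s+1) hz1 k,
    show ((s+1) + 2*((k:ℕ):ℂ)) = (s+1) + ((2*k:ℕ):ℂ) by push_cast; ring,
    Complex.cpow_add _ _ hA0, Complex.cpow_natCast,
    hoyt_prod_fact, Finset.prod_mul_distrib,
    show ∏ i ∈ Finset.range k, ((s+1) + 2*(i:ℂ) + 1) = ∏ i ∈ Finset.range k, ((s+2) + 2*(i:ℂ))
      from Finset.prod_congr rfl fun i _ => by ring,
    ← e1, ← e2, ← hKc, hPc]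
  push_cast
  ring
end
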